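/- arXiv:math/0112066 — 5 statements merged into one kernel-verified Lean document; each statement's English description precedes it below -/
import Mathlib

section
/- Let Δ be a non-codegenerate d-simplex in ℝ^d with vertices v_0, …, v_d and dual vertices w_0, …, w_d. Then the dual simplex Δ^∘ = conv{w_0,…,w_d} is itself a non-codegenerate d-simplex, its dual simplex is Δ (i.e. the dual vertices of (w_0,…,w_d) are (v_0,…,v_d)), and σ(Δ^∘) = σ(Δ). In particular the map [Δ] ↦ (-1)^{σ(Δ)}[Δ^∘] is an involution on characteristic measures of non-codegenerate simplices. -/
open MeasureTheory

noncomputable section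

/-- `σ(Δ)`: the number of negative barycentric coordinates of the origin with respect to the
vertices of the simplex. -/
def sigmaCount {d : ℕ} (lam : Fin (d + 1) → ℝ) : ℕ :=
  (Finset.univ.filter fun i => lam i < 0).card

private lemma sum_subtype_ne_aux {d : ℕ} {M : Type*} [AddCommMonoid M]
    (k : Fin (d + 1)) (f : Fin (d + 1) → M) :
    ∑ j : {j : Fin (d + 1) // j ≠ k}, f j.1 = ∑ j ∈ Finset.univ.erase k, f j :=
  (Finset.sum_subtype (Finset.univ.erase k) (fun x => by simp) f).symm

/-- the dual simplex of a non-codegenerate `d`-simplex is again a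
non-codegenerate `d`-simplex, its dual simplex is the original one (the dual vertices of
`w₀, …, w_d` are `v₀, …, v_d`), and `σ(Δ°) = σ(Δ)`; hence
`[Δ] ↦ (-1)^{σ(Δ)} [Δ°]` is an involution. -/
theorem dual_simplex_involution
    {d : ℕ}
    (v w : Fin (d + 1) → EuclideanSpace ℝ (Fin d))
    -- `Δ = conv {v 0, …, v d}` is a `d`-simplex
    (haff : AffineIndependent ℝ v)
    -- `Δ` is non-codegenerate
    (hncd : ∀ k : Fin (d + 1),
      LinearIndependent ℝ (fun j : {j : Fin (d + 1) // j ≠ k} => v j.1))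
    -- `w` are the dual vertices of `Δ`
    (hw : ∀ k, ∀ j ≠ k, inner ℝ (w k) (v j) = (1 : ℝ))
    -- `lam` are the barycentric coordinates of the origin with respect to `v`
    (lam : Fin (d + 1) → ℝ)
    (hlam1 : ∑ k, lam k = 1)
    (hlam0 : ∑ k, lam k • v k = 0) :
    -- `Δ° = conv {w 0, …, w d}` is a `d`-simplex
    AffineIndependent ℝ w ∧
    -- `Δ°` is non-codegenerate
    (∀ k : Fin (d + 1),
      LinearIndependent ℝ (fun j : {j : Fin (d + 1) // j ≠ k} => w j.1)) ∧
    -- the dual vertices of `(w 0, …, w d)` are `(v 0, …, v d)`, i.e. `(Δ°)° = Δ`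
    (∀ k, ∀ j ≠ k, inner ℝ (v k) (w j) = (1 : ℝ)) ∧
    -- `σ(Δ°) = σ(Δ)`: for any barycentric coordinates `mu` of the origin with respect to `w`
    (∀ mu : Fin (d + 1) → ℝ, (∑ k, mu k = 1) → (∑ k, mu k • w k = 0) →
      sigmaCount mu = sigmaCount lam) := by
  classical
  -- λ k ≠ 0 for all k
  have hlamne : ∀ k, lam k ≠ 0 := by
    intro k hk
    have hsum : ∑ j : {j : Fin (d + 1) // j ≠ k}, lam j.1 • v j.1 = 0 := by
      rw [sum_subtype_ne_aux k (fun j => lam j • v j)]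
      have h := Finset.add_sum_erase Finset.univ (fun j => lam j • v j) (Finset.mem_univ k)
      simp only [hk, zero_smul, zero_add, hlam0] at h
      exact h
    have hz := Fintype.linearIndependent_iff.mp (hncd k) (fun j => lam j.1) hsum
    have h0 : ∑ j, lam j = 0 := by
      rw [← Finset.add_sum_erase Finset.univ lam (Finset.mem_univ k), hk, zero_add,
        ← sum_subtype_ne_aux k lam]
      exact Finset.sum_eq_zero fun j _ => hz j
    rw [hlam1] at h0
    exact one_ne_zero h0
  -- value of ⟪w k, v k⟫
  have hc : ∀ k, (inner ℝ (w k) (v k) : ℝ) = (lam k - 1) / lam k := by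
    intro k
    have h0 : (0 : ℝ) = ∑ j, lam j * inner ℝ (w k) (v j) := by
      calc (0 : ℝ) = inner ℝ (w k) (0 : EuclideanSpace ℝ (Fin d)) := (inner_zero_right _).symm
        _ = inner ℝ (w k) (∑ j, lam j • v j) := by rw [hlam0]
        _ = ∑ j, lam j * inner ℝ (w k) (v j) := by
            rw [inner_sum]
            exact Finset.sum_congr rfl fun j _ => real_inner_smul_right _ _ _
    have h1 : ∑ j, lam j * inner ℝ (w k) (v j)
        = lam k * inner ℝ (w k) (v k) + (1 - lam k) := by
      rw [← Finset.add_sum_erase Finset.univ _ (Finset.mem_univ k)]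
      congr 1
      have hcong : ∀ j ∈ Finset.univ.erase k, lam j * (inner ℝ (w k) (v j) : ℝ) = lam j := by
        intro j hj
        rw [hw k j (Finset.ne_of_mem_erase hj), mul_one]
      rw [Finset.sum_congr rfl hcong, Finset.sum_erase_eq_sub (Finset.mem_univ k), hlam1]
    have h2 : lam k * inner ℝ (w k) (v k) = lam k - 1 := by
      rw [h1] at h0; linarith
    rw [eq_div_iff (hlamne k), mul_comm]
    exact h2
  -- the key pairing identity
  have hpair : ∀ (a : Fin (d + 1) → ℝ) (j),
      (inner ℝ (∑ k, a k • w k) (v j) : ℝ) = (∑ k, a k) - a j / lam j := by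
    intro a j
    have h1 : (inner ℝ (∑ k, a k • w k) (v j) : ℝ) = ∑ k, a k * inner ℝ (w k) (v j) := by
      rw [sum_inner]
      exact Finset.sum_congr rfl fun k _ => real_inner_smul_left _ _ _
    rw [h1, ← Finset.add_sum_erase Finset.univ _ (Finset.mem_univ j)]
    have hcong : ∀ k ∈ Finset.univ.erase j, a k * (inner ℝ (w k) (v j) : ℝ) = a k := by
      intro k hk
      rw [hw k j (Finset.ne_of_mem_erase hk).symm, mul_one]
    rw [Finset.sum_congr rfl hcong, Finset.sum_erase_eq_sub (Finset.mem_univ j), hc j]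
    field_simp [hlamne j]
    ring
  -- the key cancellation lemma
  have key : ∀ a : Fin (d + 1) → ℝ, ∑ k, a k = 0 → ∑ k, a k • w k = 0 → ∀ j, a j = 0 := by
    intro a hs hz j
    have h := hpair a j
    rw [hz, inner_zero_left, hs, zero_sub] at h
    have h2 : a j / lam j = 0 := by linarith
    exact (div_eq_zero_iff.mp h2).resolve_right (hlamne j)
  -- vectors orthogonal to all v j vanish
  have hspan : ∀ u : EuclideanSpace ℝ (Fin d), (∀ j, (inner ℝ u (v j) : ℝ) = 0) → u = 0 := by
    intro u hu
    have hcard : Fintype.card {j : Fin (d + 1) // j ≠ (0 : Fin (d + 1))} = d := by simp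
    have htop := (hncd 0).span_eq_top_of_card_eq_finrank'
      (hcard.trans finrank_euclideanSpace_fin.symm)
    have hmem : u ∈ Submodule.span ℝ
        (Set.range fun j : {j : Fin (d + 1) // j ≠ (0 : Fin (d + 1))} => v j.1) := by
      rw [htop]; exact Submodule.mem_top
    obtain ⟨c, hcu⟩ := (Submodule.mem_span_range_iff_exists_fun ℝ).mp hmem
    have h0 : (inner ℝ u u : ℝ) = 0 := by
      nth_rewrite 2 [← hcu]
      rw [inner_sum]
      refine Finset.sum_eq_zero fun j _ => ?_
      rw [real_inner_smul_right, hu j.1, mul_zero]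
    exact inner_self_eq_zero.mp h0
  -- λ are also barycentric coordinates of the origin w.r.t. w
  have hu0 : ∑ k, lam k • w k = 0 := by
    apply hspan
    intro j
    rw [hpair lam j, hlam1, div_self (hlamne j), sub_self]
  -- affine independence of w
  have haffw : AffineIndependent ℝ w := by
    rw [affineIndependent_iff]
    intro s wt h0 hz i hi
    have hsa : ∑ k, (fun j => if j ∈ s then wt j else 0) k = 0 := by
      simp only [Finset.sum_ite_mem, Finset.univ_inter]; exact h0
    have hza : ∑ k, (fun j => if j ∈ s then wt j else 0) k • w k = 0 := by
      simp only [ite_smul, zero_smul, Finset.sum_ite_mem, Finset.univ_inter]; exact hz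
    have h := key _ hsa hza i
    simpa only [if_pos hi] using h
  -- non-codegeneracy of w
  have hncdw : ∀ k : Fin (d + 1),
      LinearIndependent ℝ (fun j : {j : Fin (d + 1) // j ≠ k} => w j.1) := by
    intro k
    rw [Fintype.linearIndependent_iff]
    intro g hg j
    set a : Fin (d + 1) → ℝ := fun m => if h : m = k then 0 else g ⟨m, h⟩ with ha
    have hag : ∀ m : {j : Fin (d + 1) // j ≠ k}, a m.1 = g m := fun m => dif_neg m.2
    have hak : a k = 0 := dif_pos rfl
    have hza : ∑ m, a m • w m = 0 := by
      rw [← Finset.add_sum_erase Finset.univ _ (Finset.mem_univ k), hak, zero_smul, zero_add,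
        ← sum_subtype_ne_aux k (fun m => a m • w m)]
      rw [show (∑ m : {j : Fin (d + 1) // j ≠ k}, a m.1 • w m.1)
          = ∑ m : {j : Fin (d + 1) // j ≠ k}, g m • w m.1 from
        Finset.sum_congr rfl fun m _ => by rw [hag m]]
      exact hg
    have hsa : ∑ m, a m = 0 := by
      have h := hpair a k
      rw [hza, inner_zero_left, hak, zero_div, sub_zero] at h
      exact h.symm
    have hz := key a hsa hza
    rw [← hag j]
    exact hz j.1
  refine ⟨haffw, hncdw, ?_, ?_⟩
  · intro k j hjk
    rw [real_inner_comm]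
    exact hw j k (Ne.symm hjk)
  · intro mu hmu1 hmu0
    have hs : ∑ m, (mu m - lam m) = 0 := by
      rw [Finset.sum_sub_distrib, hmu1, hlam1, sub_self]
    have hz : ∑ m, (mu m - lam m) • w m = 0 := by
      simp only [sub_smul]
      rw [Finset.sum_sub_distrib, hmu0, hu0, sub_zero]
    have hml : mu = lam := funext fun j => by
      have h := key _ hs hz j; linarith
    rw [hml]
end
end

section
/- Let P ⊆ ℝ^d be a convex polytope containing the origin in its interior such that any d extreme points of P are linearly independent. Let Δ_1, …, Δ_n be d-simplices with pairwise disjoint interiors whose union is P and all of whose vertices are extreme points of P (so each Δ_i is non-codegenerate). Then for every point w in the interior of the polar body P^∘ there is exactly one index i with w ∈ Δ_i^∘, namely the unique i for which the origin lies in Δ_i. -/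
open MeasureTheory

noncomputable section

/-- let `P` be a convex polytope with the origin in its interior such that any
`d` extreme points of `P` are linearly independent, triangulated by simplices `Δ₁, …, Δₙ`
whose vertices are extreme points of `P`.  Then every point of the interior of the polar body
`P°` is covered by exactly one dual simplex `Δᵢ°`, namely by the dual of the unique simplex
containing the origin. -/
theorem interior_polar_covered_once
    {d : ℕ} (F : Finset (EuclideanSpace ℝ (Fin d)))
    (P : Set (EuclideanSpace ℝ (Fin d)))
    -- `P` is a convex polytope
    (hP : P = convexHull ℝ (F : Set (EuclideanSpace ℝ (Fin d))))
    -- containing the origin in its interior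
    (h0 : (0 : EuclideanSpace ℝ (Fin d)) ∈ interior P)
    -- any `d` (distinct) extreme points of `P` are linearly independent
    (hgen : ∀ g : Fin d → EuclideanSpace ℝ (Fin d), Function.Injective g →
      (∀ k, g k ∈ Set.extremePoints ℝ P) → LinearIndependent ℝ g)
    (n : ℕ)
    (v : Fin n → Fin (d + 1) → EuclideanSpace ℝ (Fin d))
    -- each `Δᵢ = conv {v i 0, …, v i d}` is a `d`-simplex
    (haff : ∀ i, AffineIndependent ℝ (v i))
    -- all vertices of the simplices are extreme points of `P`
    (hvert : ∀ i k, v i k ∈ Set.extremePoints ℝ P)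
    -- the simplices have pairwise disjoint interiors
    (hdisj : ∀ i j, i ≠ j → Disjoint (interior (convexHull ℝ (Set.range (v i))))
      (interior (convexHull ℝ (Set.range (v j)))))
    -- and their union is `P`
    (hunion : (⋃ i, convexHull ℝ (Set.range (v i))) = P)
    -- `w i` are the vertices of the dual simplex `Δᵢ°`
    (w : Fin n → Fin (d + 1) → EuclideanSpace ℝ (Fin d))
    (hw : ∀ i k, ∀ j ≠ k, inner ℝ (w i k) (v i j) = (1 : ℝ)) :
    -- there is a unique simplex containing the origin, and a point of the interior of `P°`
    -- lies in `Δᵢ°` exactly when `Δᵢ` is that simplex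
    (∃! i : Fin n, (0 : EuclideanSpace ℝ (Fin d)) ∈ convexHull ℝ (Set.range (v i))) ∧
    ∀ x ∈ interior {u : EuclideanSpace ℝ (Fin d) | ∀ y ∈ P, inner ℝ u y ≤ (1 : ℝ)},
      ∀ i : Fin n,
        (x ∈ convexHull ℝ (Set.range (w i)) ↔
          (0 : EuclideanSpace ℝ (Fin d)) ∈ convexHull ℝ (Set.range (v i))) := by
  classical
  have hfin : Module.finrank ℝ (EuclideanSpace ℝ (Fin d)) = d := finrank_euclideanSpace_fin
  have htop : ∀ i, affineSpan ℝ (Set.range (v i)) = ⊤ := fun i =>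
    (haff i).affineSpan_eq_top_iff_card_eq_finrank_add_one.mpr (by simp [hfin])
  let b : Fin n → AffineBasis (Fin (d + 1)) ℝ (EuclideanSpace ℝ (Fin d)) :=
    fun i => ⟨v i, haff i, htop i⟩
  have hbv : ∀ i, ⇑(b i) = v i := fun _ => rfl
  set lam : Fin n → Fin (d + 1) → ℝ := fun i j => (b i).coord j 0 with hlam
  have hsum : ∀ i, ∑ j, lam i j = 1 := fun i => (b i).sum_coord_apply_eq_one 0
  have hcomb : ∀ i, ∑ j, lam i j • v i j = 0 := fun i => by
    have := (b i).linear_combination_coord_eq_self 0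
    simpa [hbv] using this
  -- no barycentric coordinate of the origin vanishes
  have hne : ∀ i k, lam i k ≠ 0 := by
    intro i k hk
    have hinj : Function.Injective (v i ∘ k.succAbove) :=
      (haff i).injective.comp Fin.succAbove_right_injective
    have hli := hgen _ hinj (fun l => hvert i (k.succAbove l))
    have h0' : ∑ l, lam i (k.succAbove l) • (v i ∘ k.succAbove) l = 0 := by
      have hc := hcomb i
      rw [Fin.sum_univ_succAbove (fun j => lam i j • v i j) k] at hc
      simpa [hk] using hc
    have hz : ∀ l, lam i (k.succAbove l) = 0 := fun l =>
      linearIndependent_iff'.mp hli Finset.univ (fun l => lam i (k.succAbove l)) h0' l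
        (Finset.mem_univ l)
    have hs := hsum i
    rw [Fin.sum_univ_succAbove (fun j => lam i j) k] at hs
    simp [hk, hz] at hs
  -- the basic duality relation on the diagonal: `lam i k * (1 - ⟪w i k, v i k⟫) = 1`
  have ht : ∀ i k, lam i k * (1 - (inner ℝ (w i k) (v i k) : ℝ)) = 1 := by
    intro i k
    have h1 : (inner ℝ (w i k) (∑ j, lam i j • v i j) : ℝ) = 0 := by
      rw [hcomb i, inner_zero_right]
    rw [inner_sum] at h1
    rw [Finset.sum_congr rfl fun j _ => real_inner_smul_right (w i k) (v i j) (lam i j)] at h1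
    rw [Fin.sum_univ_succAbove (fun j => lam i j * (inner ℝ (w i k) (v i j) : ℝ)) k] at h1
    have hsplit : ∑ l, lam i (k.succAbove l) * (inner ℝ (w i k) (v i (k.succAbove l)) : ℝ)
        = ∑ l, lam i (k.succAbove l) :=
      Finset.sum_congr rfl fun l _ => by rw [hw i k _ (Fin.succAbove_ne k l), mul_one]
    rw [hsplit] at h1
    have h4 := hsum i
    rw [Fin.sum_univ_succAbove (fun j => lam i j) k] at h4
    linear_combination h4 - h1
  -- inner products of combinations of the `w i k` with the vertices
  have hIP : ∀ i (c : Fin (d + 1) → ℝ) (j : Fin (d + 1)),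
      (inner ℝ (∑ k, c k • w i k) (v i j) : ℝ)
        = (∑ k, c k) - c j + c j * (inner ℝ (w i j) (v i j) : ℝ) := by
    intro i c j
    rw [sum_inner]
    rw [Finset.sum_congr rfl fun k _ => real_inner_smul_left (w i k) (v i j) (c k)]
    rw [Fin.sum_univ_succAbove (fun k => c k * (inner ℝ (w i k) (v i j) : ℝ)) j]
    have hsplit : ∑ l, c (j.succAbove l) * (inner ℝ (w i (j.succAbove l)) (v i j) : ℝ)
        = ∑ l, c (j.succAbove l) :=
      Finset.sum_congr rfl fun l _ => by rw [hw i (j.succAbove l) j (Fin.ne_succAbove j l), mul_one]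
    rw [hsplit]
    rw [Fin.sum_univ_succAbove c j]
    ring
  -- membership of the origin via barycentric coordinates
  have hmem0 : ∀ i, ((0 : EuclideanSpace ℝ (Fin d)) ∈ convexHull ℝ (Set.range (v i))
      ↔ ∀ j, 0 ≤ lam i j) := by
    intro i
    have h := (b i).convexHull_eq_nonneg_coord
    rw [hbv] at h
    rw [h]
    exact Iff.rfl
  have hpos : ∀ i, (0 : EuclideanSpace ℝ (Fin d)) ∈ convexHull ℝ (Set.range (v i)) →
      ∀ j, 0 < lam i j := fun i h j => lt_of_le_of_ne ((hmem0 i).mp h j) (Ne.symm (hne i j))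
  have hmemint : ∀ i, (0 : EuclideanSpace ℝ (Fin d)) ∈ convexHull ℝ (Set.range (v i)) →
      (0 : EuclideanSpace ℝ (Fin d)) ∈ interior (convexHull ℝ (Set.range (v i))) := by
    intro i h
    have hic := (b i).interior_convexHull
    rw [hbv] at hic
    rw [hic]
    exact hpos i h
  -- the vertices span the whole space
  have hspan : ∀ i (z : EuclideanSpace ℝ (Fin d)),
      (∀ j, (inner ℝ z (v i j) : ℝ) = 0) → z = 0 := by
    intro i z hz
    have htopspan : Submodule.span ℝ (Set.range (v i)) = ⊤ := by
      rw [eq_top_iff]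
      intro u _
      have hu : u = ∑ j, (b i).coord j u • v i j := by
        have := (b i).linear_combination_coord_eq_self u
        rw [hbv] at this
        exact this.symm
      rw [hu]
      exact Submodule.sum_mem _ fun j _ =>
        Submodule.smul_mem _ _ (Submodule.subset_span ⟨j, rfl⟩)
    have hzmem : z ∈ (Submodule.span ℝ (Set.range (v i)))ᗮ := by
      rw [Submodule.mem_orthogonal]
      intro u hu
      induction hu using Submodule.span_induction with
      | mem u hu => obtain ⟨j, rfl⟩ := hu; rw [real_inner_comm]; exact hz j
      | zero => exact inner_zero_left z
      | add u₁ u₂ h₁ h₂ ih₁ ih₂ => rw [inner_add_left, ih₁, ih₂, add_zero]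
      | smul a u h ih => rw [real_inner_smul_left, ih, mul_zero]
    rw [htopspan, Submodule.top_orthogonal_eq_bot, Submodule.mem_bot] at hzmem
    exact hzmem
  -- strict inequality for points in the interior of the polar body
  have hstrict : ∀ z : EuclideanSpace ℝ (Fin d), z ∈ P → z ≠ 0 →
      ∀ x ∈ interior {u : EuclideanSpace ℝ (Fin d) | ∀ y ∈ P, inner ℝ u y ≤ (1 : ℝ)},
        (inner ℝ x z : ℝ) < 1 := by
    intro z hzP hz0 x hx
    rw [mem_interior_iff_mem_nhds, Metric.mem_nhds_iff] at hx
    obtain ⟨ε, hε, hball⟩ := hx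
    have hz : (0 : ℝ) < ‖z‖ := norm_pos_iff.mpr hz0
    set δ : ℝ := ε / (2 * ‖z‖) with hδdef
    have hδ : 0 < δ := by positivity
    have hmem : x + δ • z ∈ Metric.ball x ε := by
      rw [Metric.mem_ball, dist_eq_norm]
      have : x + δ • z - x = δ • z := by abel
      rw [this, norm_smul, Real.norm_eq_abs, abs_of_pos hδ, hδdef]
      have h' : ε / (2 * ‖z‖) * ‖z‖ = ε / 2 := by field_simp
      rw [h']
      linarith
    have h1 : (inner ℝ (x + δ • z) z : ℝ) ≤ 1 := hball hmem z hzP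
    rw [inner_add_left, real_inner_smul_left, real_inner_self_eq_norm_sq] at h1
    nlinarith [sq_nonneg ‖z‖, mul_pos hδ (mul_pos hz hz)]
  -- a vertex occurring together with another index is nonzero
  have hvne : ∀ i (m k : Fin (d + 1)), k ≠ m → v i m ≠ 0 := by
    intro i m k hkm
    obtain ⟨l, hl⟩ := Fin.exists_succAbove_eq (Ne.symm hkm)
    have hinj : Function.Injective (v i ∘ k.succAbove) :=
      (haff i).injective.comp Fin.succAbove_right_injective
    have hli := hgen _ hinj (fun l => hvert i (k.succAbove l))
    have hne0 := hli.ne_zero l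
    simpa [Function.comp, hl] using hne0
  -- Part 1: the unique simplex containing the origin
  have h0P : (0 : EuclideanSpace ℝ (Fin d)) ∈ ⋃ i, convexHull ℝ (Set.range (v i)) := by
    rw [hunion]; exact interior_subset h0
  obtain ⟨i0, hi0⟩ := Set.mem_iUnion.mp h0P
  have huniq : ∀ j, (0 : EuclideanSpace ℝ (Fin d)) ∈ convexHull ℝ (Set.range (v j)) →
      j = i0 := by
    intro j hj
    by_contra hne'
    exact Set.disjoint_left.mp (hdisj j i0 hne') (hmemint j hj) (hmemint i0 hi0)
  refine ⟨⟨i0, hi0, huniq⟩, ?_⟩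
  -- Part 2
  intro x hx i
  have hxP : ∀ y ∈ P, (inner ℝ x y : ℝ) ≤ 1 := interior_subset hx
  have hvmem : ∀ k, v i k ∈ P := fun k => extremePoints_subset (hvert i k)
  constructor
  · -- forward direction
    intro hxw
    rw [convexHull_range_eq_exists_affineCombination] at hxw
    obtain ⟨s, c, hc0, hc1, hxc⟩ := hxw
    set c' : Fin (d + 1) → ℝ := fun k => if k ∈ s then c k else 0 with hc'
    have hc'0 : ∀ k, 0 ≤ c' k := fun k => by
      by_cases h : k ∈ s <;> simp [hc', h]
      exact hc0 k h
    have hc'1 : ∑ k, c' k = 1 := by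
      rw [← hc1]
      simp [hc', Finset.sum_ite_mem, Finset.univ_inter]
    have hxeq : x = ∑ k, c' k • w i k := by
      rw [← hxc, Finset.affineCombination_eq_linear_combination s _ _ hc1]
      have h1 : ∑ k ∈ s, c k • w i k = ∑ k ∈ s, c' k • w i k :=
        Finset.sum_congr rfl fun k hk => by simp [hc', hk]
      have h2 : ∑ k ∈ s, c' k • w i k = ∑ k, c' k • w i k :=
        Finset.sum_subset (Finset.subset_univ s) (fun k _ hk => by simp [hc', hk])
      rw [h1, h2]
    by_contra h0i
    have hm : ∃ m, lam i m < 0 := by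
      by_contra hall
      push_neg at hall
      exact h0i ((hmem0 i).mpr hall)
    obtain ⟨m, hm⟩ := hm
    have hk : ∃ k, k ≠ m := by
      by_contra hall
      push_neg at hall
      have huniv : (Finset.univ : Finset (Fin (d + 1))) = {m} :=
        Finset.eq_singleton_iff_unique_mem.mpr ⟨Finset.mem_univ m, fun k _ => hall k⟩
      have h4 := hsum i
      rw [huniv, Finset.sum_singleton] at h4
      linarith
    obtain ⟨k, hk⟩ := hk
    have hlt1 : (inner ℝ x (v i m) : ℝ) < 1 := hstrict (v i m) (hvmem m) (hvne i m k hk) x hx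
    have h5 : (inner ℝ x (v i m) : ℝ)
        = (∑ k, c' k) - c' m + c' m * (inner ℝ (w i m) (v i m) : ℝ) := by
      rw [hxeq]; exact hIP i c' m
    have h6 := ht i m
    have h9 : 0 ≤ (inner ℝ (w i m) (v i m) : ℝ) - 1 := by nlinarith [h6, hm]
    nlinarith [h5, hc'1, hlt1, mul_nonneg (hc'0 m) h9]
  · -- backward direction
    intro h0i
    have hposi := hpos i h0i
    set μ : Fin (d + 1) → ℝ := fun k => lam i k * (1 - (inner ℝ x (v i k) : ℝ)) with hμ
    have hμ0 : ∀ k, 0 ≤ μ k := fun k =>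
      mul_nonneg (hposi k).le (by linarith [hxP (v i k) (hvmem k)])
    have h1 : ∑ k, lam i k * (inner ℝ x (v i k) : ℝ) = 0 := by
      have h1' : (inner ℝ x (∑ k, lam i k • v i k) : ℝ) = 0 := by
        rw [hcomb i, inner_zero_right]
      rw [inner_sum] at h1'
      rw [Finset.sum_congr rfl fun k _ => real_inner_smul_right x (v i k) (lam i k)] at h1'
      exact h1'
    have hμ1 : ∑ k, μ k = 1 := by
      calc ∑ k, μ k = ∑ k, (lam i k - lam i k * (inner ℝ x (v i k) : ℝ)) := by
            simp [hμ, mul_one_sub]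
        _ = (∑ k, lam i k) - ∑ k, lam i k * (inner ℝ x (v i k) : ℝ) := Finset.sum_sub_distrib _ _
        _ = 1 := by rw [hsum i, h1, sub_zero]
    have hxeq : x = ∑ k, μ k • w i k := by
      have hz : ∀ j, (inner ℝ (x - ∑ k, μ k • w i k) (v i j) : ℝ) = 0 := by
        intro j
        rw [inner_sub_left, hIP i μ j, hμ1]
        have h6 := ht i j
        have hμj : μ j = lam i j * (1 - (inner ℝ x (v i j) : ℝ)) := rfl
        rw [hμj]
        linear_combination (1 - (inner ℝ x (v i j) : ℝ)) * h6
      have := hspan i _ hz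
      exact (sub_eq_zero.mp this)
    rw [hxeq]
    have hac : Finset.univ.affineCombination ℝ (w i) μ = ∑ k, μ k • w i k :=
      Finset.affineCombination_eq_linear_combination _ _ _ hμ1
    rw [← hac]
    exact affineCombination_mem_convexHull (fun k _ => hμ0 k) hμ1
end
end

section
/- Let Δ be a non-codegenerate d-simplex in ℝ^d with vertices v_0, …, v_d, and suppose that for some index i the hyperplane through {v_j : j ≠ i} strictly separates the vertex v_i from the origin (equivalently, the barycentric coordinate of the origin at i is negative). Then the hyperplane H_{v_i} = {w : ⟨w, v_i⟩ = 1} separates the dual simplex Δ^∘ from the origin: every w ∈ Δ^∘ satisfies ⟨w, v_i⟩ ≥ 1. -/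
open MeasureTheory

noncomputable section

/-- if a facet hyperplane of a non-codegenerate `d`-simplex `Δ` strictly
separates the opposite vertex `v i` from the origin (equivalently, the `i`-th barycentric
coordinate of the origin is negative), then the hyperplane `H_{v i} = {w : ⟨w, v i⟩ = 1}`
separates the dual simplex `Δ°` from the origin: every `w ∈ Δ°` satisfies `⟨w, v i⟩ ≥ 1`. -/
theorem dual_simplex_separated
    {d : ℕ}
    (v : Fin (d + 1) → EuclideanSpace ℝ (Fin d))
    -- `Δ = conv {v 0, …, v d}` is a `d`-simplex
    (haff : AffineIndependent ℝ v)
    -- `Δ` is non-codegenerate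
    (hncd : ∀ k : Fin (d + 1),
      LinearIndependent ℝ (fun j : {j : Fin (d + 1) // j ≠ k} => v j.1))
    -- `lam` are the barycentric coordinates of the origin with respect to `v`
    (lam : Fin (d + 1) → ℝ)
    (hlam1 : ∑ k, lam k = 1)
    (hlam0 : ∑ k, lam k • v k = 0)
    -- the facet hyperplane opposite `v i` strictly separates `v i` from the origin,
    -- i.e. the barycentric coordinate of the origin at `i` is negative
    (i : Fin (d + 1)) (hi : lam i < 0)
    -- `w` are the vertices of the dual simplex `Δ°`
    (w : Fin (d + 1) → EuclideanSpace ℝ (Fin d))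
    (hw : ∀ k, ∀ j ≠ k, inner ℝ (w k) (v j) = (1 : ℝ)) :
    -- then every point of `Δ°` satisfies `⟨x, v i⟩ ≥ 1`
    ∀ x ∈ convexHull ℝ (Set.range w), (1 : ℝ) ≤ inner ℝ x (v i) := by
  have key : ∀ k, (1 : ℝ) ≤ inner ℝ (w k) (v i) := by
    intro k
    by_cases hk : i = k
    · subst hk
      -- compute inner (w i) with the relation 0 = ∑ lam j • v j
      have h0 : (0 : ℝ) = ∑ j, lam j * inner ℝ (w i) (v j) := by
        have h0' : (inner ℝ (w i) (∑ j, lam j • v j) : ℝ)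
            = ∑ j, lam j * inner ℝ (w i) (v j) := by
          rw [inner_sum]
          exact Finset.sum_congr rfl fun j _ => real_inner_smul_right _ _ _
        rw [hlam0, inner_zero_right] at h0'
        exact h0' 
      have hsplit : ∑ j, lam j * inner ℝ (w i) (v j)
          = lam i * inner ℝ (w i) (v i) + ∑ j ∈ Finset.univ.erase i, lam j := by
        rw [← Finset.add_sum_erase _ _ (Finset.mem_univ i)]
        congr 1
        apply Finset.sum_congr rfl
        intro j hj
        rw [hw i j (Finset.ne_of_mem_erase hj), mul_one]
      have herase : ∑ j ∈ Finset.univ.erase i, lam j = 1 - lam i := by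
        have := Finset.add_sum_erase _ lam (Finset.mem_univ i)
        linarith [hlam1, this]
      have h1 : lam i * inner ℝ (w i) (v i) = lam i - 1 := by
        rw [hsplit, herase] at h0; linarith
      set a : ℝ := inner ℝ (w i) (v i) with ha
      nlinarith [h1, hi]
    · rw [hw k i hk]
  intro x hx
  have hconv : Convex ℝ {x : EuclideanSpace ℝ (Fin d) | (1 : ℝ) ≤ inner ℝ x (v i)} := by
    apply convex_halfSpace_ge
    exact ⟨fun a b => inner_add_left a b (v i), fun c a => real_inner_smul_left a (v i) c⟩
  have := convexHull_min (s := Set.range w)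
    (t := {x : EuclideanSpace ℝ (Fin d) | (1 : ℝ) ≤ inner ℝ x (v i)})
    (by rintro _ ⟨k, rfl⟩; exact key k) hconv
  exact this hx
end
end

section
/- Let C_1, …, C_n ⊆ ℝ^m be polyhedral cones (each being the set of all nonnegative linear combinations of a finite set of vectors), and let α_1, …, α_n be integers such that ∑_{i=1}^n α_i 𝟙_{C_i}(x) = 0 for every x ∈ ℝ^m, where 𝟙_C denotes the characteristic function of C. Then ∑_{i=1}^n α_i 𝟙_{C_i^*}(x) = 0 for every x ∈ ℝ^m, where C^* = {x ∈ ℝ^m : ⟨x, y⟩ ≥ 0 for all y ∈ C} is the dual cone. In other words, the polarity map on characteristic functions of polyhedral cones extends to an involution of the group they span. -/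
open Classical in
lemma euler_one (n : ℕ) (I : Fin n → Set ℝ) (α : Fin n → ℝ)
    (hconv : ∀ j, Convex ℝ (I j)) (hcomp : ∀ j, IsCompact (I j))
    (hzero : ∀ t : ℝ, ∑ j, α j * (I j).indicator (fun _ => (1:ℝ)) t = 0) :
    ∑ j, α j * (if (I j).Nonempty then (1:ℝ) else 0) = 0 := by
  set a : Fin n → ℝ := fun j => sInf (I j) with ha
  set b : Fin n → ℝ := fun j => sSup (I j) with hb
  have hIcc : ∀ j, (I j).Nonempty → ∀ t : ℝ, t ∈ I j ↔ (a j ≤ t ∧ t ≤ b j) := by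
    intro j hj t
    conv_lhs => rw [eq_Icc_of_connected_compact ⟨hj, (hconv j).isPreconnected⟩ (hcomp j)]
    exact Set.mem_Icc
  have hab : ∀ j, (I j).Nonempty → a j ≤ b j := by
    intro j hj
    obtain ⟨t, ht⟩ := hj
    obtain ⟨h1, h2⟩ := (hIcc j ⟨t, ht⟩ t).mp ht
    linarith
  have h₂ : ∀ c : ℝ, ∑ j, α j * (if ((I j).Nonempty ∧ a j ≤ c ∧ c ≤ b j) then (1:ℝ) else 0) = 0 := by
    intro c
    have step : ∑ j, α j * (if ((I j).Nonempty ∧ a j ≤ c ∧ c ≤ b j) then (1:ℝ) else 0)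
        = ∑ j, α j * (I j).indicator (fun _ => (1:ℝ)) c := by
      refine Finset.sum_congr rfl fun j _ => ?_
      congr 1
      rw [Set.indicator_apply]
      symm
      by_cases hj : (I j).Nonempty
      · by_cases hc : c ∈ I j
        · rw [if_pos hc, if_pos ⟨hj, (hIcc j hj c).mp hc⟩]
        · rw [if_neg hc, if_neg (fun h => hc ((hIcc j hj c).mpr h.2))]
      · rw [if_neg (fun hc => hj ⟨c, hc⟩), if_neg (fun h => hj h.1)]
    rw [step, hzero c]
  have h₁ : ∀ c : ℝ, ∑ j, α j * (if ((I j).Nonempty ∧ a j ≤ c ∧ c < b j) then (1:ℝ) else 0) = 0 := by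
    intro c
    have hev : ∀ j : Fin n, ∀ᶠ t in nhdsWithin c (Set.Ioi c),
        (I j).indicator (fun _ => (1:ℝ)) t
          = (if ((I j).Nonempty ∧ a j ≤ c ∧ c < b j) then (1:ℝ) else 0) := by
      intro j
      by_cases hj : (I j).Nonempty
      · by_cases h1 : a j ≤ c
        · by_cases h2 : c < b j
          · have hmem : Set.Ioc c (b j) ∈ nhdsWithin c (Set.Ioi c) :=
              Ioc_mem_nhdsGT_of_mem ⟨le_refl c, h2⟩
            filter_upwards [hmem] with t ht
            rw [Set.indicator_apply, if_pos ((hIcc j hj t).mpr ⟨le_trans h1 ht.1.le, ht.2⟩),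
              if_pos ⟨hj, h1, h2⟩]
          · filter_upwards [self_mem_nhdsWithin] with t ht
            have hbc : b j ≤ c := le_of_not_gt h2
            rw [Set.indicator_apply, if_neg, if_neg]
            · exact fun h => h2 h.2.2
            · intro hmem
              have := ((hIcc j hj t).mp hmem).2
              have : t ∈ Set.Ioi c := ht
              simp only [Set.mem_Ioi] at this
              linarith [((hIcc j hj t).mp hmem).2]
        · have hca : c < a j := lt_of_not_ge h1
          have hmem : Set.Ioo c (a j) ∈ nhdsWithin c (Set.Ioi c) :=
            Ioo_mem_nhdsGT_of_mem ⟨le_refl c, hca⟩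
          filter_upwards [hmem] with t ht
          rw [Set.indicator_apply, if_neg, if_neg]
          · exact fun h => h1 h.2.1
          · intro hmem'
            have := ((hIcc j hj t).mp hmem').1
            have h2 := ht.2
            linarith
      · filter_upwards with t
        rw [Set.indicator_apply, if_neg (fun hc => hj ⟨t, hc⟩), if_neg (fun h => hj h.1)]
    have hev' : ∀ᶠ t in nhdsWithin c (Set.Ioi c),
        ∑ j, α j * (I j).indicator (fun _ => (1:ℝ)) t
          = ∑ j, α j * (if ((I j).Nonempty ∧ a j ≤ c ∧ c < b j) then (1:ℝ) else 0) := by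
      filter_upwards [Filter.eventually_all.mpr hev] with t ht
      exact Finset.sum_congr rfl fun j _ => by rw [ht j]
    obtain ⟨t, ht⟩ := hev'.exists
    rw [← ht, hzero t]
  have h₃ : ∀ c : ℝ, ∑ j, α j * (if ((I j).Nonempty ∧ b j = c) then (1:ℝ) else 0) = 0 := by
    intro c
    have key : ∀ j : Fin n,
        (if ((I j).Nonempty ∧ a j ≤ c ∧ c ≤ b j) then (1:ℝ) else 0)
          - (if ((I j).Nonempty ∧ a j ≤ c ∧ c < b j) then (1:ℝ) else 0)
          = (if ((I j).Nonempty ∧ b j = c) then (1:ℝ) else 0) := by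
      intro j
      by_cases hj : (I j).Nonempty
      · by_cases hbc : b j = c
        · rw [if_pos ⟨hj, hbc ▸ hab j hj, le_of_eq hbc.symm⟩, if_neg, if_pos ⟨hj, hbc⟩]
          · norm_num
          · rintro ⟨-, -, h⟩
            rw [hbc] at h
            exact lt_irrefl c h
        · have hiff : ((I j).Nonempty ∧ a j ≤ c ∧ c ≤ b j) ↔ ((I j).Nonempty ∧ a j ≤ c ∧ c < b j) := by
            constructor
            · rintro ⟨x1, x2, x3⟩
              exact ⟨x1, x2, lt_of_le_of_ne x3 (fun h => hbc h.symm)⟩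
            · rintro ⟨x1, x2, x3⟩
              exact ⟨x1, x2, le_of_lt x3⟩
          rw [if_congr hiff rfl rfl, sub_self, if_neg (fun h : (I j).Nonempty ∧ b j = c => hbc h.2)]
      · rw [if_neg (fun h => hj h.1), if_neg (fun h => hj h.1), if_neg (fun h => hj h.1)]
        ring
    calc ∑ j, α j * (if ((I j).Nonempty ∧ b j = c) then (1:ℝ) else 0)
        = ∑ j, (α j * (if ((I j).Nonempty ∧ a j ≤ c ∧ c ≤ b j) then (1:ℝ) else 0)
            - α j * (if ((I j).Nonempty ∧ a j ≤ c ∧ c < b j) then (1:ℝ) else 0)) := by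
          refine Finset.sum_congr rfl fun j _ => ?_
          rw [← mul_sub, key j]
      _ = 0 := by rw [Finset.sum_sub_distrib, h₂ c, h₁ c, sub_zero]
  have hsplit : ∑ j, α j * (if (I j).Nonempty then (1:ℝ) else 0)
      = ∑ c ∈ Finset.image b Finset.univ,
          ∑ j, α j * (if ((I j).Nonempty ∧ b j = c) then (1:ℝ) else 0) := by
    rw [Finset.sum_comm]
    refine Finset.sum_congr rfl fun j _ => ?_
    by_cases hj : (I j).Nonempty
    · simp only [hj, true_and, if_true]
      rw [← Finset.mul_sum]
      congr 1
      rw [Finset.sum_ite_eq (Finset.image b Finset.univ) (b j) (fun _ => (1:ℝ)),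
        if_pos (Finset.mem_image_of_mem b (Finset.mem_univ j))]
    · simp [hj]
  rw [hsplit]
  exact Finset.sum_eq_zero fun c _ => h₃ c

lemma snoc_combo (m : ℕ) (u : Fin m → ℝ) (t₁ t₂ a b : ℝ) (hab : a + b = 1) :
    (Fin.snoc u (a * t₁ + b * t₂) : Fin (m+1) → ℝ)
      = a • (Fin.snoc u t₁ : Fin (m+1) → ℝ) + b • (Fin.snoc u t₂ : Fin (m+1) → ℝ) := by
  funext i
  refine Fin.lastCases ?_ ?_ i
  · simp [Fin.snoc_last]
  · intro i
    simp only [Fin.snoc_castSucc, Pi.add_apply, Pi.smul_apply, smul_eq_mul]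
    have : a * u i + b * u i = (a + b) * u i := by ring
    rw [this, hab, one_mul]

open Classical in
lemma euler_nd (m : ℕ) : ∀ (n : ℕ) (K : Fin n → Set (Fin m → ℝ)) (α : Fin n → ℝ),
    (∀ j, Convex ℝ (K j)) → (∀ j, IsCompact (K j)) →
    (∀ x, ∑ j, α j * (K j).indicator (fun _ => (1:ℝ)) x = 0) →
    ∑ j, α j * (if (K j).Nonempty then (1:ℝ) else 0) = 0 := by
  induction m with
  | zero =>
    intro n K α hconv hcomp hzero
    have step : ∑ j, α j * (if (K j).Nonempty then (1:ℝ) else 0)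
        = ∑ j, α j * (K j).indicator (fun _ => (1:ℝ)) 0 := by
      refine Finset.sum_congr rfl fun j _ => ?_
      congr 1
      rw [Set.indicator_apply]
      refine if_congr ?_ rfl rfl
      constructor
      · rintro ⟨y, hy⟩
        have : y = 0 := Subsingleton.elim _ _
        exact this ▸ hy
      · intro h; exact ⟨0, h⟩
    rw [step]; exact hzero 0
  | succ m ih =>
    intro n K α hconv hcomp hzero
    set S : Fin n → (Fin m → ℝ) → Set ℝ := fun j u => {t | Fin.snoc u t ∈ K j} with hS
    set P : Fin n → Set (Fin m → ℝ) := fun j => Fin.init '' K j with hP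
    have hSconv : ∀ j u, Convex ℝ (S j u) := by
      intro j u t₁ h₁ t₂ h₂ a b ha hb hab
      show (Fin.snoc u (a • t₁ + b • t₂) : Fin (m+1) → ℝ) ∈ K j
      simp only [smul_eq_mul]
      rw [snoc_combo m u t₁ t₂ a b hab]
      exact hconv j h₁ h₂ ha hb hab
    have hScomp : ∀ j u, IsCompact (S j u) := by
      intro j u
      have heq : S j u = (fun x : Fin (m+1) → ℝ => x (Fin.last m)) ''
          (K j ∩ {x : Fin (m+1) → ℝ | Fin.init x = u}) := by
        ext t
        constructor
        · intro ht
          exact ⟨Fin.snoc u t, ⟨ht, by simp⟩, by simp⟩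
        · rintro ⟨x, ⟨hx, hinit⟩, rfl⟩
          show (Fin.snoc u (x (Fin.last m)) : Fin (m+1) → ℝ) ∈ K j
          rw [← hinit, Fin.snoc_init_self]
          exact hx
      rw [heq]
      refine IsCompact.image ?_ (continuous_apply (Fin.last m))
      refine (hcomp j).inter_right ?_
      have : {x : Fin (m+1) → ℝ | Fin.init x = u}
          = (Fin.init : (Fin (m+1) → ℝ) → (Fin m → ℝ)) ⁻¹' {u} := by
        ext x; simp [Set.mem_preimage]
      rw [this]
      exact (isClosed_singleton).preimage (continuous_pi fun i => continuous_apply i.castSucc)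
    have hPconv : ∀ j, Convex ℝ (P j) := by
      intro j
      have : P j = (LinearMap.funLeft ℝ ℝ (Fin.castSucc : Fin m → Fin (m+1))) '' K j := rfl
      rw [this]
      exact (hconv j).linear_image _
    have hPcomp : ∀ j, IsCompact (P j) :=
      fun j => (hcomp j).image (continuous_pi fun i => continuous_apply i.castSucc)
    have hslice : ∀ u, ∑ j, α j * (if (S j u).Nonempty then (1:ℝ) else 0) = 0 := by
      intro u
      refine euler_one n (fun j => S j u) α (fun j => hSconv j u) (fun j => hScomp j u) ?_
      intro t
      have step : ∑ j, α j * (S j u).indicator (fun _ => (1:ℝ)) t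
          = ∑ j, α j * (K j).indicator (fun _ => (1:ℝ)) (Fin.snoc u t) :=
        Finset.sum_congr rfl fun j _ => rfl
      rw [step]; exact hzero _
    have hproj : ∀ u, ∑ j, α j * (P j).indicator (fun _ => (1:ℝ)) u = 0 := by
      intro u
      have step : ∑ j, α j * (P j).indicator (fun _ => (1:ℝ)) u
          = ∑ j, α j * (if (S j u).Nonempty then (1:ℝ) else 0) := by
        refine Finset.sum_congr rfl fun j _ => ?_
        congr 1
        rw [Set.indicator_apply]
        refine if_congr ?_ rfl rfl
        constructor
        · rintro ⟨x, hx, rfl⟩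
          exact ⟨x (Fin.last m), show (Fin.snoc (Fin.init x) (x (Fin.last m)) : Fin (m+1) → ℝ) ∈ K j by
            rw [Fin.snoc_init_self]; exact hx⟩
        · rintro ⟨t, ht⟩
          exact ⟨Fin.snoc u t, ht, by simp⟩
      rw [step]; exact hslice u
    have step : ∑ j, α j * (if (K j).Nonempty then (1:ℝ) else 0)
        = ∑ j, α j * (if (P j).Nonempty then (1:ℝ) else 0) := by
      refine Finset.sum_congr rfl fun j _ => ?_
      congr 1
      refine if_congr ?_ rfl rfl
      constructor
      · rintro ⟨x, hx⟩
        exact ⟨Fin.init x, x, hx, rfl⟩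
      · rintro ⟨u, x, hx, rfl⟩
        exact ⟨x, hx⟩
    rw [step]
    exact ih n P α hPconv hPcomp hproj

variable {E : Type*} [NormedAddCommGroup E] [NormedSpace ℝ E] [FiniteDimensional ℝ E]

/-- the finitely generated cone on `G` -/
def coneOf (G : Finset E) : Set E :=
  {x | ∃ c : E → ℝ, (∀ y, 0 ≤ c y) ∧ x = ∑ y ∈ G, c y • y}

lemma zero_mem_coneOf (G : Finset E) : (0 : E) ∈ coneOf G :=
  ⟨fun _ => 0, fun _ => le_refl 0, by simp⟩

lemma coneOf_convex (G : Finset E) : Convex ℝ (coneOf G) := by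
  rintro x ⟨c, hc, rfl⟩ x' ⟨c', hc', rfl⟩ a b ha hb hab
  refine ⟨fun y => a * c y + b * c' y,
    fun y => add_nonneg (mul_nonneg ha (hc y)) (mul_nonneg hb (hc' y)), ?_⟩
  rw [Finset.smul_sum, Finset.smul_sum, ← Finset.sum_add_distrib]
  refine Finset.sum_congr rfl fun y _ => ?_
  rw [add_smul, smul_smul, smul_smul]

lemma smul_mem_coneOf {G : Finset E} {x : E} (hx : x ∈ coneOf G) {s : ℝ} (hs : 0 ≤ s) :
    s • x ∈ coneOf G := by
  obtain ⟨c, hc, rfl⟩ := hx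
  refine ⟨fun y => s * c y, fun y => mul_nonneg hs (hc y), ?_⟩
  rw [Finset.smul_sum]
  exact Finset.sum_congr rfl fun y _ => by rw [smul_smul]

open Classical in
/-- Carathéodory for cones: every element of a f.g. cone lies in the cone of a
linearly independent subset of the generators. -/
lemma coneOf_caratheodory (G : Finset E) :
    ∀ x ∈ coneOf G, ∃ S : Finset E, S ⊆ G ∧
      LinearIndependent ℝ (fun i : {x // x ∈ S} => (i : E)) ∧ x ∈ coneOf S := by
  induction G using Finset.strongInductionOn with
  | _ G ih =>
    intro x hx
    by_cases hli : LinearIndependent ℝ (fun i : {x // x ∈ G} => (i : E))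
    · exact ⟨G, subset_refl G, hli, hx⟩
    · obtain ⟨g, hgsum, i₀, hgi₀⟩ := Fintype.not_linearIndependent_iff.mp hli
      obtain ⟨c, hc, rfl⟩ := hx
      -- d : E → ℝ supported on G with ∑ d y • y = 0 and some d y ≠ 0 on G
      set d0 : E → ℝ := fun y => if h : y ∈ G then g ⟨y, h⟩ else 0 with hd0
      have hd0sum : ∑ y ∈ G, d0 y • y = 0 := by
        rw [← hgsum, ← Finset.sum_coe_sort G (fun y => d0 y • y)]
        refine Finset.sum_congr rfl fun i _ => ?_
        simp only [hd0, dif_pos i.2]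
      have hd0ne : d0 (↑i₀) ≠ 0 := by
        simp only [hd0, dif_pos i₀.2]
        exact hgi₀
      -- make sure some positive value on G
      set d : E → ℝ := if ∃ y ∈ G, 0 < d0 y then d0 else -d0 with hd
      have hdsum : ∑ y ∈ G, d y • y = 0 := by
        by_cases hcase : ∃ y ∈ G, 0 < d0 y
        · rw [hd, if_pos hcase]; exact hd0sum
        · rw [hd, if_neg hcase]
          simp only [Pi.neg_apply, neg_smul]
          rw [Finset.sum_neg_distrib, hd0sum, neg_zero]
      have hdpos : ∃ y ∈ G, 0 < d y := by
        by_cases hcase : ∃ y ∈ G, 0 < d0 y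
        · rw [hd, if_pos hcase]; exact hcase
        · rw [hd, if_neg hcase]
          push_neg at hcase
          refine ⟨↑i₀, i₀.2, ?_⟩
          simp only [Pi.neg_apply]
          have := hcase ↑i₀ i₀.2
          cases lt_or_eq_of_le this with
          | inl h => linarith
          | inr h => exact absurd h hd0ne
      -- pivot
      set F : Finset E := G.filter (fun y => 0 < d y) with hF
      have hFne : F.Nonempty := by
        obtain ⟨y, hyG, hy⟩ := hdpos
        exact ⟨y, Finset.mem_filter.mpr ⟨hyG, hy⟩⟩
      obtain ⟨y₀, hy₀F, hy₀min⟩ := Finset.exists_min_image F (fun y => c y / d y) hFne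
      have hy₀G : y₀ ∈ G := (Finset.mem_filter.mp hy₀F).1
      have hdy₀ : 0 < d y₀ := (Finset.mem_filter.mp hy₀F).2
      set t : ℝ := c y₀ / d y₀ with hts
      have ht0 : 0 ≤ t := div_nonneg (hc y₀) (le_of_lt hdy₀)
      -- new coefficients
      set c' : E → ℝ := fun y => if y ∈ G.erase y₀ then c y - t * d y else 0 with hc'
      have hc'nonneg : ∀ y, 0 ≤ c' y := by
        intro y
        show 0 ≤ if y ∈ G.erase y₀ then c y - t * d y else 0
        by_cases hy : y ∈ G.erase y₀
        · rw [if_pos hy]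
          by_cases hdy : 0 < d y
          · have hyF : y ∈ F := Finset.mem_filter.mpr ⟨Finset.mem_of_mem_erase hy, hdy⟩
            have := hy₀min y hyF
            rw [sub_nonneg]
            calc t * d y ≤ (c y / d y) * d y := by
                  exact mul_le_mul_of_nonneg_right this (le_of_lt hdy)
              _ = c y := div_mul_cancel₀ (c y) (ne_of_gt hdy)
          · push_neg at hdy
            have : 0 ≤ -(t * d y) := by
              rw [neg_nonneg]
              exact mul_nonpos_of_nonneg_of_nonpos ht0 hdy
            have := hc y
            linarith
        · rw [if_neg hy]
      have hxrep : ∑ y ∈ G, c y • y = ∑ y ∈ G.erase y₀, c' y • y := by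
        have e1 : ∑ y ∈ G.erase y₀, c' y • y = ∑ y ∈ G.erase y₀, (c y - t * d y) • y := by
          refine Finset.sum_congr rfl fun y hy => ?_
          show (if y ∈ G.erase y₀ then c y - t * d y else 0) • y = _
          rw [if_pos hy]
        have e2 : ∑ y ∈ G, (c y - t * d y) • y
            = (c y₀ - t * d y₀) • y₀ + ∑ y ∈ G.erase y₀, (c y - t * d y) • y :=
          (Finset.add_sum_erase G _ hy₀G).symm
        have e3 : c y₀ - t * d y₀ = 0 := by
          rw [hts, div_mul_cancel₀ (c y₀) (ne_of_gt hdy₀), sub_self]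
        have e4 : ∑ y ∈ G, (c y - t * d y) • y = ∑ y ∈ G, c y • y := by
          have : ∑ y ∈ G, (c y - t * d y) • y
              = ∑ y ∈ G, c y • y - t • ∑ y ∈ G, d y • y := by
            rw [Finset.smul_sum, ← Finset.sum_sub_distrib]
            refine Finset.sum_congr rfl fun y _ => ?_
            rw [sub_smul, smul_smul]
          rw [this, hdsum, smul_zero, sub_zero]
        rw [e1, ← e4, e2, e3, zero_smul, zero_add]
      have hxmem : ∑ y ∈ G, c y • y ∈ coneOf (G.erase y₀) := by
        rw [hxrep]
        exact ⟨c', hc'nonneg, rfl⟩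
      obtain ⟨S, hS1, hS2, hS3⟩ := ih (G.erase y₀) (Finset.erase_ssubset hy₀G) _ hxmem
      exact ⟨S, subset_trans hS1 (Finset.erase_subset y₀ G), hS2, hS3⟩

lemma coneOf_isClosed_of_li (S : Finset E)
    (hS : LinearIndependent ℝ (fun i : {x // x ∈ S} => (i : E))) : IsClosed (coneOf S) := by
  classical
  set L : ({x // x ∈ S} → ℝ) →ₗ[ℝ] E :=
    Fintype.linearCombination ℝ (fun i : {x // x ∈ S} => (i : E)) with hL
  have hLapp : ∀ c : {x // x ∈ S} → ℝ, L c = ∑ i : {x // x ∈ S}, c i • (i : E) := by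
    intro c
    simp [hL, Fintype.linearCombination_apply]
  have hker : LinearMap.ker L = ⊥ := by
    rw [LinearMap.ker_eq_bot']
    intro c hcL
    rw [hLapp] at hcL
    funext i
    exact Fintype.linearIndependent_iff.mp hS c hcL i
  have hemb := LinearMap.isClosedEmbedding_of_injective hker
  have himg : coneOf S = L '' {c : {x // x ∈ S} → ℝ | ∀ i, 0 ≤ c i} := by
    ext x
    constructor
    · rintro ⟨c, hcn, rfl⟩
      refine ⟨fun i => c i, fun i => hcn i, ?_⟩
      rw [hLapp]
      exact Finset.sum_coe_sort S (fun y => c y • y)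
    · rintro ⟨c, hcn, rfl⟩
      refine ⟨fun y => if h : y ∈ S then c ⟨y, h⟩ else 0, ?_, ?_⟩
      · intro y
        show 0 ≤ if h : y ∈ S then c ⟨y, h⟩ else 0
        by_cases h : y ∈ S
        · rw [dif_pos h]; exact hcn ⟨y, h⟩
        · rw [dif_neg h]
      · rw [hLapp, ← Finset.sum_coe_sort S
          (fun y => (if h : y ∈ S then c ⟨y, h⟩ else 0) • y)]
        refine Finset.sum_congr rfl fun i _ => ?_
        rw [dif_pos i.2]
  rw [himg]
  refine hemb.isClosedMap _ ?_
  have : {c : {x // x ∈ S} → ℝ | ∀ i, 0 ≤ c i} = ⋂ i, {c | 0 ≤ c i} := by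
    ext c; simp
  rw [this]
  exact isClosed_iInter fun i => isClosed_le continuous_const (continuous_apply i)

lemma coneOf_isClosed (G : Finset E) : IsClosed (coneOf G) := by
  classical
  have hcover : coneOf G = ⋃ S ∈ (G.powerset.filter
      (fun S => LinearIndependent ℝ (fun i : {x // x ∈ S} => (i : E)))), coneOf S := by
    ext x
    simp only [Set.mem_iUnion, Finset.mem_filter, Finset.mem_powerset]
    constructor
    · intro hx
      obtain ⟨S, h1, h2, h3⟩ := coneOf_caratheodory G x hx
      exact ⟨S, ⟨h1, h2⟩, h3⟩
    · rintro ⟨S, ⟨h1, _⟩, c, hcn, rfl⟩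
      refine ⟨fun y => if y ∈ S then c y else 0, fun y => ?_, ?_⟩
      · show 0 ≤ if y ∈ S then c y else 0
        by_cases h : y ∈ S
        · rw [if_pos h]; exact hcn y
        · rw [if_neg h]
      · rw [← Finset.sum_subset h1 (fun y _ hynS => by
          show (if y ∈ S then c y else 0) • y = 0
          rw [if_neg hynS, zero_smul])]
        refine Finset.sum_congr rfl fun y hy => ?_
        show c y • y = (if y ∈ S then c y else 0) • y
        rw [if_pos hy]
  rw [hcover]
  exact Set.Finite.isClosed_biUnion (Finset.finite_toSet _)
    (fun S hS => coneOf_isClosed_of_li S (Finset.mem_filter.mp hS).2)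



noncomputable section

/-- the polarity map on characteristic functions of polyhedral cones extends to
an involution of the group they span: if a signed combination `∑ αᵢ 𝟙_{Cᵢ}` of characteristic
functions of polyhedral cones vanishes identically, then so does the dual combination
`∑ αᵢ 𝟙_{Cᵢ*}`. -/
theorem cone_polarity_involution
    {m : ℕ} (n : ℕ)
    (C : Fin n → Set (EuclideanSpace ℝ (Fin m)))
    -- each `Cᵢ` is a polyhedral cone: all nonnegative combinations of a finite set of vectors
    (hC : ∀ i, ∃ G : Finset (EuclideanSpace ℝ (Fin m)),
      C i = {x | ∃ c : EuclideanSpace ℝ (Fin m) → ℝ,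
        (∀ y, 0 ≤ c y) ∧ x = ∑ y ∈ G, c y • y})
    (α : Fin n → ℤ)
    -- `∑ αᵢ 𝟙_{Cᵢ} = 0`
    (hzero : ∀ x : EuclideanSpace ℝ (Fin m),
      ∑ i, (α i : ℝ) * Set.indicator (C i) (fun _ => (1 : ℝ)) x = 0) :
    -- then `∑ αᵢ 𝟙_{Cᵢ*} = 0`, where `Cᵢ* = {x | ⟨x, y⟩ ≥ 0 for all y ∈ Cᵢ}` is the dual cone
    ∀ x : EuclideanSpace ℝ (Fin m),
      ∑ i, (α i : ℝ) *
        Set.indicator {z : EuclideanSpace ℝ (Fin m) | ∀ y ∈ C i, 0 ≤ (inner ℝ z y : ℝ)}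
          (fun _ => (1 : ℝ)) x = 0 := by
  classical
  intro x
  choose G hG using hC
  have hGcone : ∀ i, C i = coneOf (G i) := hG
  set D : Fin n → Set (EuclideanSpace ℝ (Fin m)) :=
    fun i => {z | ∀ y ∈ C i, 0 ≤ (inner ℝ z y : ℝ)} with hD
  set H : Set (EuclideanSpace ℝ (Fin m)) := {w | (inner ℝ x w : ℝ) ≤ -1} with hH
  have hHconv : Convex ℝ H := by
    have : H = (innerSL ℝ x : EuclideanSpace ℝ (Fin m) →L[ℝ] ℝ) ⁻¹' Set.Iic (-1) := rfl
    rw [this]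
    exact (convex_Iic (-1)).linear_preimage (innerSL ℝ x : _ →L[ℝ] ℝ).toLinearMap
  have hHclosed : IsClosed H := by
    have : H = (innerSL ℝ x : EuclideanSpace ℝ (Fin m) →L[ℝ] ℝ) ⁻¹' Set.Iic (-1) := rfl
    rw [this]
    exact isClosed_Iic.preimage (innerSL ℝ x).continuous
  have hdual : ∀ i, x ∈ D i ↔ ¬ (C i ∩ H).Nonempty := by
    intro i
    constructor
    · rintro hx ⟨y, hyC, hyH⟩
      have h1 := hx y hyC
      have h2 : (inner ℝ x y : ℝ) ≤ -1 := hyH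
      linarith
    · intro hne
      intro y hy
      by_contra hlt
      push_neg at hlt
      have hyne : (inner ℝ x y : ℝ) ≠ 0 := ne_of_lt hlt
      set s : ℝ := -1 / (inner ℝ x y : ℝ) with hs
      have hspos : 0 ≤ s := by
        rw [hs]
        exact le_of_lt (div_pos_of_neg_of_neg (by norm_num) hlt)
      have hsy : s • y ∈ C i := by
        rw [hGcone i] at hy ⊢
        exact smul_mem_coneOf hy hspos
      have hsyH : s • y ∈ H := by
        show (inner ℝ x (s • y) : ℝ) ≤ -1
        rw [real_inner_smul_right, hs, div_mul_cancel₀ (-1 : ℝ) hyne]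
      exact hne ⟨s • y, hsy, hsyH⟩
  -- witnesses and radius
  set w : Fin n → EuclideanSpace ℝ (Fin m) :=
    fun i => if h : (C i ∩ H).Nonempty then h.choose else 0 with hw
  set R : ℝ := ∑ i, ‖w i‖ with hR
  have hwR : ∀ i, ‖w i‖ ≤ R :=
    fun i => Finset.single_le_sum (fun j _ => norm_nonneg (w j)) (Finset.mem_univ i)
  set K : Fin n → Set (EuclideanSpace ℝ (Fin m)) :=
    fun i => C i ∩ H ∩ Metric.closedBall 0 R with hK
  have hKconv : ∀ i, Convex ℝ (K i) := by
    intro i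
    exact (((hGcone i) ▸ coneOf_convex (G i)).inter hHconv).inter (convex_closedBall 0 R)
  have hKcomp : ∀ i, IsCompact (K i) := by
    intro i
    refine (isCompact_closedBall (0 : EuclideanSpace ℝ (Fin m)) R).of_isClosed_subset ?_
      Set.inter_subset_right
    exact (((hGcone i) ▸ coneOf_isClosed (G i)).inter hHclosed).inter Metric.isClosed_closedBall
  have hKne : ∀ i, (K i).Nonempty ↔ (C i ∩ H).Nonempty := by
    intro i
    constructor
    · rintro ⟨v, hv⟩
      exact ⟨v, hv.1⟩
    · intro h
      refine ⟨w i, ⟨?_, ?_⟩⟩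
      · rw [hw]
        simp only [dif_pos h]
        exact h.choose_spec
      · rw [Metric.mem_closedBall, dist_zero_right]
        exact hwR i
  have hKzero : ∀ v, ∑ i, (α i : ℝ) * (K i).indicator (fun _ => (1:ℝ)) v = 0 := by
    intro v
    have step : ∑ i, (α i : ℝ) * (K i).indicator (fun _ => (1:ℝ)) v
        = (∑ i, (α i : ℝ) * (C i).indicator (fun _ => (1:ℝ)) v)
          * (H ∩ Metric.closedBall 0 R).indicator (fun _ => (1:ℝ)) v := by
      rw [Finset.sum_mul]
      refine Finset.sum_congr rfl fun i _ => ?_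
      rw [mul_assoc]
      congr 1
      rw [Set.indicator_apply, Set.indicator_apply, Set.indicator_apply]
      by_cases h1 : v ∈ C i <;> by_cases h2 : v ∈ H ∩ Metric.closedBall 0 R
      · rw [if_pos ⟨⟨h1, h2.1⟩, h2.2⟩, if_pos h1, if_pos h2]; norm_num
      · rw [if_neg (fun h : v ∈ K i => h2 ⟨h.1.2, h.2⟩), if_pos h1, if_neg h2]; norm_num
      · rw [if_neg (fun h : v ∈ K i => h1 h.1.1), if_neg h1, if_pos h2]; norm_num
      · rw [if_neg (fun h : v ∈ K i => h1 h.1.1), if_neg h1, if_neg h2]; norm_num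
    rw [step, hzero v, zero_mul]
  have heuler : ∑ i, (α i : ℝ) * (if (K i).Nonempty then (1:ℝ) else 0) = 0 := by
    have h := euler_nd m n (fun i => (EuclideanSpace.equiv (Fin m) ℝ) '' K i) (fun i => (α i : ℝ))
      (fun i => (hKconv i).linear_image (EuclideanSpace.equiv (Fin m) ℝ).toLinearMap)
      (fun i => (hKcomp i).image (EuclideanSpace.equiv (Fin m) ℝ).continuous) (fun v => by
        rw [← hKzero ((EuclideanSpace.equiv (Fin m) ℝ).symm v)]
        refine Finset.sum_congr rfl fun i _ => ?_
        congr 1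
        simp only [Set.indicator_apply]
        refine if_congr ?_ rfl rfl
        constructor
        · rintro ⟨y, hy, rfl⟩
          simpa using hy
        · intro h
          exact ⟨_, h, (EuclideanSpace.equiv (Fin m) ℝ).apply_symm_apply v⟩)
    simpa [Set.image_nonempty] using h
  have hsum0 : ∑ i, (α i : ℝ) = 0 := by
    have step : ∑ i, (α i : ℝ) = ∑ i, (α i : ℝ) * (C i).indicator (fun _ => (1:ℝ)) 0 := by
      refine Finset.sum_congr rfl fun i _ => ?_
      rw [Set.indicator_apply, if_pos (by rw [hGcone i]; exact zero_mem_coneOf (G i)), mul_one]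
    rw [step, hzero 0]
  have key : ∀ i, (D i).indicator (fun _ => (1:ℝ)) x
      = 1 - (if (K i).Nonempty then (1:ℝ) else 0) := by
    intro i
    rw [Set.indicator_apply]
    by_cases hx : x ∈ D i
    · rw [if_pos hx, if_neg (fun h => (hdual i).mp hx ((hKne i).mp h))]
      norm_num
    · rw [if_neg hx, if_pos ((hKne i).mpr (not_not.mp (fun h => hx ((hdual i).mpr h))))]
      norm_num
  calc ∑ i, (α i : ℝ) * (D i).indicator (fun _ => (1:ℝ)) x
      = ∑ i, ((α i : ℝ) * 1 - (α i : ℝ) * (if (K i).Nonempty then (1:ℝ) else 0)) := by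
        refine Finset.sum_congr rfl fun i _ => ?_
        rw [key i, mul_sub]
    _ = 0 := by
        rw [Finset.sum_sub_distrib, heuler, sub_zero]
        simp [hsum0]
end
end

section
/- Let d ≥ 1, let v_0, …, v_{d-2} ∈ ℝ^d, and let x_1, x_2, x_3 ∈ ℝ^d be collinear points such that each of the three simplices Δ_{ab} = conv{v_0,…,v_{d-2}, x_a, x_b} (for {a,b} = {1,2}, {2,3}, {3,1}) is a non-codegenerate d-simplex. For i ≤ d−2, let w_i be the dual vertex of Δ_{ab} opposite the facet hyperplane through the points other than v_i, and let y_a be the dual vertex of Δ_{ab} opposite the facet hyperplane omitting x_a. Then the points w_0, …, w_{d-2} are the same for all three simplices (⟨w_i, v_j⟩ = 1 for j ≠ i and ⟨w_i, x_a⟩ = 1 for all a), each y_a satisfies ⟨y_a, v_j⟩ = 1 for all j and ⟨y_a, x_a⟩ = 1, and y_1, y_2, y_3 are collinear. -/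
noncomputable section

lemma exists_inner_eq_one {d : ℕ} {ι : Type} [Fintype ι] [Nonempty ι]
    {b : ι → EuclideanSpace ℝ (Fin d)} (h : LinearIndependent ℝ b)
    (hcard : Fintype.card ι = d) :
    ∃ w : EuclideanSpace ℝ (Fin d), ∀ m, inner ℝ w (b m) = (1 : ℝ) := by
  have hfr : Fintype.card ι = Module.finrank ℝ (EuclideanSpace ℝ (Fin d)) := by
    simp [hcard]
  let B := basisOfLinearIndependentOfCardEqFinrank h hfr
  let φ := B.constr ℝ (fun _ => (1 : ℝ))
  refine ⟨(InnerProductSpace.toDual ℝ _).symm (LinearMap.toContinuousLinearMap φ), fun m => ?_⟩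
  rw [InnerProductSpace.toDual_symm_apply]
  have : B m = b m := by
    simp [B, coe_basisOfLinearIndependentOfCardEqFinrank]
  rw [LinearMap.coe_toContinuousLinearMap', ← this]
  simp [φ, Module.Basis.constr_basis]

/-- let `x 0, x 1, x 2` be collinear points such that each of the three
simplices `Δ_{ab} = conv {v 0, …, v (d-2), x a, x b}` is a non-codegenerate `d`-simplex.
Then the dual vertices `w i` opposite the facets omitting `v i` are the same for all three
simplices (`⟨w i, v j⟩ = 1` for `j ≠ i` and `⟨w i, x a⟩ = 1` for all `a`), each dual vertex
`y a` satisfies `⟨y a, v j⟩ = 1` for all `j` and `⟨y a, x a⟩ = 1`, and `y 0, y 1, y 2` are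
collinear. -/
theorem dual_of_stellar_relation
    {d : ℕ} (hd : 1 ≤ d)
    (v : Fin (d - 1) → EuclideanSpace ℝ (Fin d))
    (x : Fin 3 → EuclideanSpace ℝ (Fin d))
    -- `x 0`, `x 1`, `x 2` are collinear
    (hcol : Collinear ℝ (Set.range x))
    -- each `Δ_{ab} = conv {v…, x a, x b}` is a `d`-simplex
    (haff : ∀ a b : Fin 3, a ≠ b →
      AffineIndependent ℝ (Sum.elim v ![x a, x b] : Fin (d - 1) ⊕ Fin 2 →
        EuclideanSpace ℝ (Fin d)))
    -- which is non-codegenerate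
    (hncd : ∀ a b : Fin 3, a ≠ b → ∀ k : Fin (d - 1) ⊕ Fin 2,
      LinearIndependent ℝ
        (fun j : {j : Fin (d - 1) ⊕ Fin 2 // j ≠ k} => Sum.elim v ![x a, x b] j.1)) :
    ∃ (w : Fin (d - 1) → EuclideanSpace ℝ (Fin d)) (y : Fin 3 → EuclideanSpace ℝ (Fin d)),
      -- the `w i` are the common dual vertices of all three simplices:
      (∀ i j, j ≠ i → inner ℝ (w i) (v j) = (1 : ℝ)) ∧
      (∀ i a, inner ℝ (w i) (x a) = (1 : ℝ)) ∧
      -- each `y a` lies on the hyperplanes `H_{v j}` for all `j` and on `H_{x a}`: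
      (∀ a j, inner ℝ (y a) (v j) = (1 : ℝ)) ∧
      (∀ a, inner ℝ (y a) (x a) = (1 : ℝ)) ∧
      -- and `y 0, y 1, y 2` are collinear
      Collinear ℝ (Set.range y) := by
  have h01 : (0 : Fin 3) ≠ 1 := by decide
  have hne1 : ∀ a : Fin 3, a ≠ a + 1 := by decide
  -- cardinality of the index subtypes
  have hcardsub : ∀ k : Fin (d - 1) ⊕ Fin 2,
      Fintype.card {j : Fin (d - 1) ⊕ Fin 2 // j ≠ k} = d := by
    intro k
    have : Fintype.card {j : Fin (d - 1) ⊕ Fin 2 // j ≠ k}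
        = Fintype.card (Fin (d - 1) ⊕ Fin 2) - 1 := by
      simp [Fintype.card_subtype_compl]
    simp only [this, Fintype.card_sum, Fintype.card_fin]
    omega
  have hnesub : ∀ k : Fin (d - 1) ⊕ Fin 2,
      Nonempty {j : Fin (d - 1) ⊕ Fin 2 // j ≠ k} := by
    intro k
    rw [← Fintype.card_pos_iff, hcardsub k]; omega
  -- collinearity of `x` in coordinates
  obtain ⟨u, hu⟩ := (collinear_iff_of_mem (Set.mem_range_self (0 : Fin 3))).1 hcol
  choose r hr using fun a => hu (x a) (Set.mem_range_self a)
  simp only [vadd_eq_add] at hr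
  have hx01 : x 0 ≠ x 1 := by
    intro h
    have := (haff 0 1 h01).injective (a₁ := Sum.inr 0) (a₂ := Sum.inr 1) (by simpa using h)
    simp at this
  have hr1 : r 1 ≠ 0 := by
    intro h
    apply hx01
    have := hr 1
    rw [h, zero_smul, zero_add] at this
    exact this.symm
  -- key: inner ℝ products at `x 0` and `x 1` determine all three
  have key : ∀ w : EuclideanSpace ℝ (Fin d), inner ℝ w (x 0) = (1 : ℝ) →
      inner ℝ w (x 1) = (1 : ℝ) → ∀ a, inner ℝ w (x a) = (1 : ℝ) := by
    intro w h0 h1 a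
    have hwu : inner ℝ w u = (0 : ℝ) := by
      have e1 : inner ℝ w (x 1) = r 1 * inner ℝ w u + inner ℝ w (x 0) := by
        rw [hr 1, inner_add_right, real_inner_smul_right]
      rw [h0, h1] at e1
      have : r 1 * inner ℝ w u = 0 := by linarith
      rcases mul_eq_zero.1 this with h | h
      · exact absurd h hr1
      · exact h
    have : inner ℝ w (x a) = r a * inner ℝ w u + inner ℝ w (x 0) := by
      rw [hr a, inner_add_right, real_inner_smul_right]
    rw [this, hwu, h0]; ring
  -- the vertices `w i`
  have hW : ∀ i : Fin (d - 1), ∃ w : EuclideanSpace ℝ (Fin d),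
      (∀ j, j ≠ i → inner ℝ w (v j) = (1 : ℝ)) ∧ (∀ a, inner ℝ w (x a) = (1 : ℝ)) := by
    intro i
    have := hnesub (Sum.inl i)
    obtain ⟨w, hw⟩ := exists_inner_eq_one (hncd 0 1 h01 (Sum.inl i)) (hcardsub (Sum.inl i))
    have hwx0 : inner ℝ w (x 0) = (1 : ℝ) := by
      have := hw ⟨Sum.inr 0, by simp⟩; simpa using this
    have hwx1 : inner ℝ w (x 1) = (1 : ℝ) := by
      have := hw ⟨Sum.inr 1, by simp⟩; simpa using this
    refine ⟨w, fun j hj => ?_, key w hwx0 hwx1⟩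
    have := hw ⟨Sum.inl j, by simp [hj]⟩; simpa using this
  choose w hwv hwx using hW
  -- the vertices `y a`
  have hY : ∀ a : Fin 3, ∃ y : EuclideanSpace ℝ (Fin d),
      (∀ j, inner ℝ y (v j) = (1 : ℝ)) ∧ inner ℝ y (x a) = (1 : ℝ) := by
    intro a
    have := hnesub (Sum.inr 1)
    obtain ⟨y, hy⟩ := exists_inner_eq_one (hncd a (a + 1) (hne1 a) (Sum.inr 1))
      (hcardsub (Sum.inr 1))
    refine ⟨y, fun j => ?_, ?_⟩
    · have := hy ⟨Sum.inl j, by simp⟩; simpa using this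
    · have := hy ⟨Sum.inr 0, by simp⟩; simpa using this
  choose y hyv hyx using hY
  refine ⟨w, y, hwv, hwx, hyv, hyx, ?_⟩
  -- collinearity of the `y a`
  have hvli : LinearIndependent ℝ v := by
    have h := (hncd 0 1 h01 (Sum.inr 0)).comp
      (fun i : Fin (d - 1) => (⟨Sum.inl i, by simp⟩ : {j : Fin (d - 1) ⊕ Fin 2 // j ≠ Sum.inr 0}))
      (fun i i' h => by simpa using congrArg Subtype.val h)
    exact h
  set K : Submodule ℝ (EuclideanSpace ℝ (Fin d)) := Submodule.span ℝ (Set.range v) with hK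
  have hfrK : Module.finrank ℝ K = d - 1 := by
    rw [hK, finrank_span_eq_card hvli, Fintype.card_fin]
  have hfrW : Module.finrank ℝ Kᗮ = 1 := by
    have := Submodule.finrank_add_finrank_orthogonal K
    rw [hfrK] at this
    simp only [finrank_euclideanSpace, Fintype.card_fin] at this
    omega
  have hmem : ∀ a, y a - y 0 ∈ Kᗮ := by
    intro a
    rw [Submodule.mem_orthogonal]
    intro z hz
    induction hz using Submodule.span_induction with
    | mem z hz =>
      obtain ⟨j, rfl⟩ := hz
      rw [real_inner_comm, inner_sub_left, hyv a j, hyv 0 j, sub_self]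
    | zero => simp
    | add a' b' _ _ ha hb => rw [inner_add_left, ha, hb, add_zero]
    | smul c a' _ ha => rw [inner_smul_left, ha, mul_zero]
  have hsub : vectorSpan ℝ (Set.range y) ≤ Kᗮ := by
    rw [vectorSpan_def]
    apply Submodule.span_le.2
    rintro z ⟨p, ⟨a, rfl⟩, q, ⟨b, rfl⟩, rfl⟩
    have h2 : y a -ᵥ y b = (y a - y 0) - (y b - y 0) := by
      rw [vsub_eq_sub]; abel
    show y a -ᵥ y b ∈ (Kᗮ : Set _)
    rw [h2]
    exact Submodule.sub_mem _ (hmem a) (hmem b)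
  have : Module.rank ℝ (vectorSpan ℝ (Set.range y)) ≤ Module.rank ℝ Kᗮ :=
    Submodule.rank_mono hsub
  have hrkW : Module.rank ℝ Kᗮ = 1 := by
    rw [← Module.finrank_eq_rank, hfrW]; norm_num
  unfold Collinear
  rw [hrkW] at this
  exact this
end
end
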